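/- If a connected graph G has a cut vertex v whose deletion produces connected components of sizes c_1 \geq ... \geq c_d with d \geq 3, and G has a connected partition of type \mu, then the spider S(c_1,...,c_d) also has a connected partition of type \mu. -/

import Mathlib

open SimpleGraph

def spider (d : ℕ) (l : Fin d → ℕ) : SimpleGraph (Option (Σ i : Fin d, Fin (l i))) :=
  SimpleGraph.fromRel (fun u v =>
    (∃ (i : Fin d) (h : 0 < l i), u = none ∧ v = some ⟨i, ⟨0, h⟩⟩) ∨
    (∃ (i : Fin d) (j k : Fin (l i)), (j : ℕ) + 1 = (k : ℕ) ∧ u = some ⟨i, j⟩ ∧ v = some ⟨i, k⟩))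

lemma indexOf_flatten_block {α : Type*} [DecidableEq α] :
    ∀ (ls : List (List α)), ls.flatten.Nodup → ∀ q ∈ ls,
      ∃ a : ℕ, ∀ u ∈ q, List.idxOf u ls.flatten = a + List.idxOf u q
  | [] => by intro _ q hq; exact absurd hq List.not_mem_nil
  | p :: rest => by
      intro hnd q hq
      rw [List.flatten_cons] at hnd
      rcases List.mem_cons.mp hq with rfl | hq'
      · exact ⟨0, fun u hu => by
          rw [List.flatten_cons, List.idxOf_append_of_mem hu, Nat.zero_add]⟩
      · obtain ⟨a, ha⟩ := indexOf_flatten_block rest hnd.of_append_right q hq'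
        refine ⟨p.length + a, fun u hu => ?_⟩
        have humem : u ∈ rest.flatten := List.mem_flatten.mpr ⟨q, hq', hu⟩
        have hnp : u ∉ p := fun hp => (List.disjoint_of_nodup_append hnd) hp humem
        rw [List.flatten_cons, List.idxOf_append_of_notMem hnp, ha u hu, Nat.add_assoc]

lemma spider_adj_zero {d : ℕ} {c : Fin d → ℕ} (i : Fin d) (j : Fin (c i)) (hj : (j : ℕ) = 0) :
    (spider d c).Adj none (some ⟨i, j⟩) := by
  have h0 : 0 < c i := hj ▸ j.2
  have hj' : j = ⟨0, h0⟩ := Fin.ext hj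
  subst hj'
  rw [spider, SimpleGraph.fromRel_adj]
  exact ⟨by simp, Or.inl (Or.inl ⟨i, h0, rfl, rfl⟩)⟩

lemma spider_adj_succ {d : ℕ} {c : Fin d → ℕ} (i : Fin d) (j k : Fin (c i))
    (h : (j : ℕ) + 1 = (k : ℕ)) :
    (spider d c).Adj (some ⟨i, j⟩) (some ⟨i, k⟩) := by
  rw [spider, SimpleGraph.fromRel_adj]
  refine ⟨fun he => ?_, Or.inl (Or.inr ⟨i, j, k, h, rfl, rfl⟩)⟩
  simp only [Option.some.injEq, Sigma.mk.inj_iff, heq_eq_eq, true_and] at he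
  rw [he] at h
  omega

lemma spider_downclosed_connected {d : ℕ} {c : Fin d → ℕ}
    (T : Set (Option (Σ i : Fin d, Fin (c i)))) (h0 : none ∈ T)
    (hdc : ∀ (i : Fin d) (j k : Fin (c i)), some ⟨i, j⟩ ∈ T → (k : ℕ) ≤ (j : ℕ) →
      some ⟨i, k⟩ ∈ T) :
    ((spider d c).induce T).Connected := by
  have key : ∀ n : ℕ, ∀ (i : Fin d) (j : Fin (c i)) (hj : some ⟨i, j⟩ ∈ T), (j : ℕ) = n →
      ((spider d c).induce T).Reachable ⟨some ⟨i, j⟩, hj⟩ ⟨none, h0⟩ := by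
    intro n
    induction n with
    | zero =>
      intro i j hj hjn
      have hadj : ((spider d c).induce T).Adj ⟨some ⟨i, j⟩, hj⟩ ⟨none, h0⟩ :=
        (spider_adj_zero i j hjn).symm
      exact hadj.reachable
    | succ n ih =>
      intro i j hj hjn
      have hk : n < c i := by have := j.2; omega
      have hkT : some ⟨i, ⟨n, hk⟩⟩ ∈ T := hdc i j ⟨n, hk⟩ hj (by show n ≤ (j : ℕ); omega)
      have hadj : ((spider d c).induce T).Adj ⟨some ⟨i, ⟨n, hk⟩⟩, hkT⟩ ⟨some ⟨i, j⟩, hj⟩ :=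
        spider_adj_succ i ⟨n, hk⟩ j (by show n + 1 = (j : ℕ); omega)
      exact hadj.symm.reachable.trans (ih i ⟨n, hk⟩ hkT rfl)
  rw [SimpleGraph.connected_iff]
  have H : ∀ x : T, ((spider d c).induce T).Reachable x ⟨none, h0⟩ := by
    rintro ⟨x, hx⟩
    match x, hx with
    | none, hx => exact Reachable.refl _
    | some ⟨i, j⟩, hx => exact key (j : ℕ) i j hx rfl
  exact ⟨fun x y => (H x).trans (H y).symm, ⟨⟨none, h0⟩⟩⟩

lemma spider_interval_connected {d : ℕ} {c : Fin d → ℕ} (i : Fin d) (a m : ℕ) (hm : 0 < m)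
    (ham : a + m ≤ c i) (T : Set (Option (Σ i : Fin d, Fin (c i))))
    (hT : ∀ x, x ∈ T ↔ ∃ j : Fin (c i), a ≤ (j : ℕ) ∧ (j : ℕ) < a + m ∧ x = some ⟨i, j⟩) :
    ((spider d c).induce T).Connected := by
  have ha : a < c i := by omega
  have hbase : some ⟨i, ⟨a, ha⟩⟩ ∈ T :=
    (hT _).mpr ⟨⟨a, ha⟩, le_refl _, by show a < a + m; omega, rfl⟩
  have key : ∀ n : ℕ, ∀ (j : Fin (c i)) (hj : some ⟨i, j⟩ ∈ T), (j : ℕ) = a + n →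
      ((spider d c).induce T).Reachable ⟨some ⟨i, j⟩, hj⟩ ⟨some ⟨i, ⟨a, ha⟩⟩, hbase⟩ := by
    intro n
    induction n with
    | zero =>
      intro j hj hjn
      have hj' : j = ⟨a, ha⟩ := Fin.ext (show (j : ℕ) = a by omega)
      subst hj'
      exact Reachable.refl _
    | succ n ih =>
      intro j hj hjn
      have hbound : (j : ℕ) < a + m := by
        obtain ⟨j', _, hj2, hEq⟩ := (hT _).mp hj
        simp only [Option.some.injEq, Sigma.mk.inj_iff, heq_eq_eq, true_and] at hEq
        rw [hEq]
        exact hj2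
      have hk : a + n < c i := by omega
      have hkT : some ⟨i, ⟨a + n, hk⟩⟩ ∈ T :=
        (hT _).mpr ⟨⟨a + n, hk⟩, by show a ≤ a + n; omega, by show a + n < a + m; omega, rfl⟩
      have hadj : ((spider d c).induce T).Adj ⟨some ⟨i, ⟨a + n, hk⟩⟩, hkT⟩ ⟨some ⟨i, j⟩, hj⟩ :=
        spider_adj_succ i ⟨a + n, hk⟩ j (by show a + n + 1 = (j : ℕ); omega)
      exact hadj.symm.reachable.trans (ih ⟨a + n, hk⟩ hkT rfl)
  rw [SimpleGraph.connected_iff]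
  have H : ∀ (x) (hx : x ∈ T),
      ((spider d c).induce T).Reachable ⟨x, hx⟩ ⟨some ⟨i, ⟨a, ha⟩⟩, hbase⟩ := by
    intro x hx
    obtain ⟨j, hj1, _, rfl⟩ := (hT x).mp hx
    exact key ((j : ℕ) - a) j hx (by omega)
  exact ⟨fun x y => (H x x.2).trans (H y y.2).symm, ⟨⟨_, hbase⟩⟩⟩

def HasConnectedPartition {V : Type} [Fintype V] [DecidableEq V]
    (G : SimpleGraph V) (μ : Multiset ℕ) : Prop :=
  ∃ P : Finpartition (Finset.univ : Finset V),
    (∀ p ∈ P.parts, (G.induce (p : Set V)).Connected) ∧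
    P.parts.val.map Finset.card = μ

theorem graph_connected_partition_to_spider {V : Type} [Fintype V] [DecidableEq V]
    (G : SimpleGraph V) (hG : G.Connected) (v : V)
    (d : ℕ) (hd : 3 ≤ d)
    (c : Fin d → ℕ) (hmono : ∀ i j : Fin d, i ≤ j → c j ≤ c i)
    (e : (G.induce {u | u ≠ v}).ConnectedComponent ≃ Fin d)
    (hsize : ∀ comp, Nat.card comp.supp = c (e comp))
    (μ : Multiset ℕ) (h : HasConnectedPartition G μ) :
    HasConnectedPartition (spider d c) μ := by
  classical
  obtain ⟨P, hPconn, hPcard⟩ := h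
  obtain ⟨B, hB, hvB⟩ := P.exists_mem (Finset.mem_univ v)
  let G' : SimpleGraph {u : V | u ≠ v} := G.induce {u : V | u ≠ v}
  let idx : ∀ u : V, u ≠ v → Fin d := fun u hu => e (G'.connectedComponentMk ⟨u, hu⟩)
  let S : Fin d → Finset V := fun i => Finset.univ.filter (fun u => ∃ hu : u ≠ v, idx u hu = i)
  have hSmem : ∀ (i : Fin d) (u : V), u ∈ S i ↔ ∃ hu : u ≠ v, idx u hu = i := by
    intro i u; simp [S]
  have hSidx : ∀ (u : V) (hu : u ≠ v), u ∈ S (idx u hu) := fun u hu => (hSmem _ u).mpr ⟨hu, rfl⟩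
  have hSuniq : ∀ (i : Fin d) (u : V) (hu : u ≠ v), u ∈ S i → idx u hu = i := by
    intro i u hu h
    obtain ⟨hu', hi⟩ := (hSmem i u).mp h
    exact hi
  -- cardinality of S i
  have hScard : ∀ i, (S i).card = c i := by
    intro i
    have h1 := hsize (e.symm i)
    rw [Equiv.apply_symm_apply] at h1
    rw [← h1, ← Nat.card_eq_finsetCard]
    apply Nat.card_congr
    apply Equiv.symm
    have key : ∀ x : {u : V | u ≠ v}, x ∈ (e.symm i).supp → x.1 ∈ S i := by
      intro x hx
      rw [SimpleGraph.ConnectedComponent.mem_supp_iff] at hx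
      refine (hSmem i x.1).mpr ⟨x.2, ?_⟩
      show e (G'.connectedComponentMk ⟨x.1, x.2⟩) = i
      rw [show (⟨x.1, x.2⟩ : {u : V | u ≠ v}) = x from rfl, hx, Equiv.apply_symm_apply]
    refine Equiv.ofBijective
      (fun x : ((e.symm i).supp : Set {u : V | u ≠ v}) =>
        (⟨(x : {u : V | u ≠ v}).1, key x.1 x.2⟩ : {x // x ∈ S i})) ⟨?_, ?_⟩
    · intro a b hab
      have h2 := congrArg (Subtype.val : {x // x ∈ S i} → V) hab
      exact Subtype.ext (Subtype.ext h2)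
    · intro y
      obtain ⟨hu, hi⟩ := (hSmem i y.1).mp y.2
      refine ⟨⟨⟨y.1, hu⟩, ?_⟩, Subtype.ext rfl⟩
      rw [SimpleGraph.ConnectedComponent.mem_supp_iff]
      have h3 : e.symm (e (G'.connectedComponentMk ⟨(y : V), hu⟩)) = e.symm i :=
        congrArg e.symm hi
      rw [Equiv.symm_apply_apply] at h3
      exact h3
  -- parts other than B avoid v and live in a single S i
  have hvnotp : ∀ p ∈ P.parts, p ≠ B → v ∉ p := by
    intro p hp hpB hvp
    exact Finset.disjoint_left.mp
      (P.disjoint (Finset.mem_coe.mpr hp) (Finset.mem_coe.mpr hB) hpB) hvp hvB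
  have hpart_sub : ∀ p ∈ P.parts, p ≠ B → ∃ i, ∀ u ∈ p, u ∈ S i := by
    intro p hp hpB
    obtain ⟨u0, hu0⟩ := P.nonempty_of_mem_parts hp
    have hne : ∀ u ∈ p, u ≠ v := fun u hu he => hvnotp p hp hpB (he ▸ hu)
    have hu0v := hne u0 hu0
    refine ⟨idx u0 hu0v, fun u hu => ?_⟩
    have huv := hne u hu
    have hreach : G'.Reachable ⟨u, huv⟩ ⟨u0, hu0v⟩ := by
      have hc := hPconn p hp
      have hr := hc.preconnected ⟨u, hu⟩ ⟨u0, hu0⟩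
      let f : G.induce (↑p : Set V) →g G' := ⟨fun x => ⟨x.1, hne x.1 x.2⟩, fun h => h⟩
      exact hr.map f
    have hcomp : G'.connectedComponentMk ⟨u, huv⟩ = G'.connectedComponentMk ⟨u0, hu0v⟩ :=
      SimpleGraph.ConnectedComponent.sound hreach
    exact (hSmem _ u).mpr ⟨huv, congrArg e hcomp⟩
  -- the per-leg lists
  let Q : Fin d → Finset (Finset V) := fun i => (P.parts.erase B).filter (· ⊆ S i)
  have hQmem : ∀ (i : Fin d) (p : Finset V),
      p ∈ Q i ↔ p ∈ P.parts ∧ p ≠ B ∧ ∀ u ∈ p, u ∈ S i := by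
    intro i p
    simp only [Q, Finset.mem_filter, Finset.mem_erase, Finset.subset_iff]
    tauto
  have hcover : ∀ (i : Fin d) (u : V), u ∈ S i → u ∈ B ∩ S i ∨ ∃ p ∈ Q i, u ∈ p := by
    intro i u huS
    obtain ⟨q, hq, huq⟩ := P.exists_mem (Finset.mem_univ u)
    by_cases hqB : q = B
    · exact Or.inl (Finset.mem_inter.mpr ⟨hqB ▸ huq, huS⟩)
    · right
      obtain ⟨i', hsub⟩ := hpart_sub q hq hqB
      obtain ⟨huv, hidx⟩ := (hSmem i u).mp huS
      have hii : i' = i := by rw [← hidx, hSuniq i' u huv (hsub u huq)]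
      exact ⟨q, (hQmem i q).mpr ⟨hq, hqB, hii ▸ hsub⟩, huq⟩
  let ls : Fin d → List (List V) := fun i => (B ∩ S i).toList :: ((Q i).toList.map Finset.toList)
  let L : Fin d → List V := fun i => (ls i).flatten
  have hLsplit : ∀ i, L i = (B ∩ S i).toList ++ ((Q i).toList.map Finset.toList).flatten :=
    fun i => List.flatten_cons
  have hLnodup : ∀ i, (L i).Nodup := by
    intro i
    apply List.nodup_flatten.mpr
    constructor
    · intro l hl
      rcases List.mem_cons.mp hl with rfl | hl'
      · exact Finset.nodup_toList _
      · obtain ⟨p, _, rfl⟩ := List.mem_map.mp hl'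
        exact Finset.nodup_toList _
    · rw [List.pairwise_cons]
      constructor
      · intro l hl
        obtain ⟨p, hp, rfl⟩ := List.mem_map.mp hl
        have hpQ := (hQmem i p).mp (Finset.mem_toList.mp hp)
        intro x hx hx'
        have hxB : x ∈ B := Finset.mem_inter.mp (Finset.mem_toList.mp hx) |>.1
        have hxp : x ∈ p := Finset.mem_toList.mp hx'
        exact Finset.disjoint_left.mp
          (P.disjoint (Finset.mem_coe.mpr hB) (Finset.mem_coe.mpr hpQ.1) (Ne.symm hpQ.2.1))
          hxB hxp
      · apply List.Pairwise.map
        · intro p q hpq x hx hx'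
          exact Finset.disjoint_left.mp hpq (Finset.mem_toList.mp hx) (Finset.mem_toList.mp hx')
        · apply List.Pairwise.imp_of_mem ?_ (Finset.nodup_toList (Q i))
          intro p q hp hq hne
          have hpQ := (hQmem i p).mp (Finset.mem_toList.mp hp)
          have hqQ := (hQmem i q).mp (Finset.mem_toList.mp hq)
          exact P.disjoint (Finset.mem_coe.mpr hpQ.1) (Finset.mem_coe.mpr hqQ.1) hne
  have hLmem : ∀ (i : Fin d) (u : V), u ∈ L i ↔ u ∈ S i := by
    intro i u
    constructor
    · intro hu
      obtain ⟨l, hl, hul⟩ := List.mem_flatten.mp hu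
      rcases List.mem_cons.mp hl with rfl | hl'
      · exact (Finset.mem_inter.mp (Finset.mem_toList.mp hul)).2
      · obtain ⟨p, hp, rfl⟩ := List.mem_map.mp hl'
        exact ((hQmem i p).mp (Finset.mem_toList.mp hp)).2.2 u (Finset.mem_toList.mp hul)
    · intro hu
      rcases hcover i u hu with h1 | ⟨p, hp, hup⟩
      · exact List.mem_flatten.mpr ⟨(B ∩ S i).toList, List.mem_cons_self,
          Finset.mem_toList.mpr h1⟩
      · exact List.mem_flatten.mpr ⟨p.toList,
          List.mem_cons_of_mem _ (List.mem_map.mpr ⟨p, Finset.mem_toList.mpr hp, rfl⟩),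
          Finset.mem_toList.mpr hup⟩
  have hLlen : ∀ i, (L i).length = c i := by
    intro i
    have h1 := List.toFinset_card_of_nodup (hLnodup i)
    have h2 : (L i).toFinset = S i :=
      Finset.ext (fun u => by rw [List.mem_toFinset]; exact hLmem i u)
    rw [h2, hScard] at h1
    exact h1.symm
  have hidxltS : ∀ (i : Fin d) (u : V), u ∈ S i → List.idxOf u (L i) < c i := by
    intro i u hu
    rw [← hLlen i]
    exact List.idxOf_lt_length_iff.mpr ((hLmem i u).mpr hu)
  have hidxlt : ∀ (u : V) (hu : u ≠ v), List.idxOf u (L (idx u hu)) < c (idx u hu) :=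
    fun u hu => hidxltS _ u (hSidx u hu)
  -- the bijection
  let φ : V → Option (Σ i : Fin d, Fin (c i)) := fun u =>
    if hu : u = v then none else some ⟨idx u hu, ⟨List.idxOf u (L (idx u hu)), hidxlt u hu⟩⟩
  let ψ : Option (Σ i : Fin d, Fin (c i)) → V := fun x =>
    match x with
    | none => v
    | some ⟨i, j⟩ => (L i).get ⟨(j : ℕ), by rw [hLlen]; exact j.2⟩
  have hφv : φ v = none := dif_pos rfl
  have hφu : ∀ (u : V) (hu : u ≠ v),
      φ u = some ⟨idx u hu, ⟨List.idxOf u (L (idx u hu)), hidxlt u hu⟩⟩ :=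
    fun u hu => dif_neg hu
  have hφS : ∀ (i : Fin d) (u : V), u ∈ S i → ∀ (hlt : List.idxOf u (L i) < c i),
      φ u = some ⟨i, ⟨List.idxOf u (L i), hlt⟩⟩ := by
    intro i u huS hlt
    obtain ⟨huv, hidx⟩ := (hSmem i u).mp huS
    rw [hφu u huv]
    refine congrArg some (Sigma.ext hidx ?_)
    rw [Fin.heq_ext_iff (congrArg c hidx)]
    show List.idxOf u (L (idx u huv)) = List.idxOf u (L i)
    rw [hidx]
  have hφinv : ∀ (u : V) (i : Fin d) (j : Fin (c i)), φ u = some ⟨i, j⟩ →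
      u ∈ S i ∧ (j : ℕ) = List.idxOf u (L i) := by
    intro u i j hEq
    have huv : u ≠ v := by rintro rfl; rw [hφv] at hEq; cases hEq
    rw [hφu u huv] at hEq
    injection hEq with hEq
    obtain ⟨hi, hj⟩ := Sigma.mk.inj_iff.mp hEq
    constructor
    · exact hi ▸ hSidx u huv
    · have hval : List.idxOf u (L (idx u huv)) = (j : ℕ) :=
        (Fin.heq_ext_iff (congrArg c hi)).mp hj
      rw [← hval, hi]
  have hleft : Function.LeftInverse ψ φ := by
    intro u
    by_cases hu : u = v
    · rw [hu, hφv]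
    · rw [hφu u hu]
      exact List.idxOf_get _
  have hright : Function.RightInverse ψ φ := by
    rintro (_ | ⟨i, j⟩)
    · exact hφv
    · have hlt : (j : ℕ) < (L i).length := by rw [hLlen i]; exact j.2
      have humem : (L i).get ⟨(j : ℕ), hlt⟩ ∈ L i := List.get_mem _ _
      have huS := (hLmem i _).mp humem
      have hidxeq : List.idxOf ((L i).get ⟨(j : ℕ), hlt⟩) (L i) = (j : ℕ) :=
        List.get_idxOf (hLnodup i) _
      show φ ((L i).get ⟨(j : ℕ), hlt⟩) = some ⟨i, j⟩
      rw [hφS i _ huS (by rw [hidxeq]; exact j.2)]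
      exact congrArg some (congrArg (Sigma.mk i) (Fin.ext hidxeq))
  let φe : V ≃ Option (Σ i : Fin d, Fin (c i)) := ⟨φ, ψ, hleft, hright⟩
  let femb : V ↪ Option (Σ i : Fin d, Fin (c i)) := φe.toEmbedding
  have hfemb : ∀ u : V, femb u = φ u := fun u => rfl
  -- offsets for parts in Q i
  have hblock : ∀ (i : Fin d) (p : Finset V), p ∈ Q i →
      ∃ a : ℕ, (∀ u ∈ p, List.idxOf u (L i) = a + List.idxOf u p.toList) ∧
        a + p.card ≤ c i := by
    intro i p hp
    have hpmem : p.toList ∈ ls i :=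
      List.mem_cons_of_mem _ (List.mem_map.mpr ⟨p, Finset.mem_toList.mpr hp, rfl⟩)
    obtain ⟨a, ha⟩ := indexOf_flatten_block (ls i) (hLnodup i) p.toList hpmem
    have hpQ := (hQmem i p).mp hp
    have hm : 0 < p.card := Finset.card_pos.mpr (P.nonempty_of_mem_parts hpQ.1)
    refine ⟨a, fun u hu => ha u (Finset.mem_toList.mpr hu), ?_⟩
    have hlt : p.card - 1 < p.toList.length := by rw [Finset.length_toList]; omega
    have hulast : p.toList.get ⟨p.card - 1, hlt⟩ ∈ p := Finset.mem_toList.mp (List.get_mem _ _)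
    have h1 : List.idxOf (p.toList.get ⟨p.card - 1, hlt⟩) p.toList = p.card - 1 :=
      List.get_idxOf (Finset.nodup_toList p) _
    have h2 := ha _ (Finset.mem_toList.mpr hulast)
    rw [h1] at h2
    have h3 := hidxltS i _ (hpQ.2.2 _ hulast)
    rw [h2] at h3
    omega
  -- connectivity of the image of B
  have hconnB : ((spider d c).induce (↑(B.map femb) : Set (Option (Σ i : Fin d, Fin (c i))))).Connected := by
    apply spider_downclosed_connected
    · exact Finset.mem_coe.mpr (Finset.mem_map.mpr ⟨v, hvB, hφv⟩)
    · intro i j k hj hk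
      obtain ⟨u, huB, hφu'⟩ := Finset.mem_map.mp (Finset.mem_coe.mp hj)
      obtain ⟨huS, hjval⟩ := hφinv u i j hφu'
      obtain ⟨huv, _⟩ := (hSmem i u).mp huS
      have huBS : u ∈ (B ∩ S i).toList :=
        Finset.mem_toList.mpr (Finset.mem_inter.mpr ⟨huB, huS⟩)
      have hhead : List.idxOf u (L i) = List.idxOf u ((B ∩ S i).toList) := by
        rw [hLsplit i]; exact List.idxOf_append_of_mem huBS
      have hjlt : (j : ℕ) < (B ∩ S i).card := by
        rw [hjval, hhead, ← Finset.length_toList]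
        exact List.idxOf_lt_length_iff.mpr huBS
      have hklt : (k : ℕ) < ((B ∩ S i).toList).length := by
        rw [Finset.length_toList]; omega
      have hu'mem : (B ∩ S i).toList.get ⟨(k : ℕ), hklt⟩ ∈ B ∩ S i :=
        Finset.mem_toList.mp (List.get_mem _ _)
      have hu'B : (B ∩ S i).toList.get ⟨(k : ℕ), hklt⟩ ∈ B := (Finset.mem_inter.mp hu'mem).1
      have hu'S : (B ∩ S i).toList.get ⟨(k : ℕ), hklt⟩ ∈ S i := (Finset.mem_inter.mp hu'mem).2
      have hidxk : List.idxOf ((B ∩ S i).toList.get ⟨(k : ℕ), hklt⟩) (L i) = (k : ℕ) := by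
        rw [hLsplit i, List.idxOf_append_of_mem (Finset.mem_toList.mpr hu'mem)]
        exact List.get_idxOf (Finset.nodup_toList _) _
      refine Finset.mem_coe.mpr (Finset.mem_map.mpr ⟨_, hu'B, ?_⟩)
      show φ _ = some ⟨i, k⟩
      rw [hφS i _ hu'S (by rw [hidxk]; exact k.2)]
      exact congrArg some (congrArg (Sigma.mk i) (Fin.ext hidxk))
  -- connectivity of images of other parts
  have hconnQ : ∀ (i : Fin d) (p : Finset V), p ∈ Q i →
      ((spider d c).induce (↑(p.map femb) : Set (Option (Σ i : Fin d, Fin (c i))))).Connected := by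
    intro i p hp
    have hpQ := (hQmem i p).mp hp
    obtain ⟨a, ha, ham⟩ := hblock i p hp
    have hm : 0 < p.card := Finset.card_pos.mpr (P.nonempty_of_mem_parts hpQ.1)
    apply spider_interval_connected i a p.card hm ham
    intro x
    constructor
    · intro hx
      obtain ⟨u, hup, hφu'⟩ := Finset.mem_map.mp (Finset.mem_coe.mp hx)
      have huS : u ∈ S i := hpQ.2.2 u hup
      have hlt : List.idxOf u (L i) < c i := hidxltS i u huS
      have hφu2 : φ u = some ⟨i, ⟨List.idxOf u (L i), hlt⟩⟩ := hφS i u huS hlt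
      have hidxp : List.idxOf u p.toList < p.card := by
        rw [← Finset.length_toList]
        exact List.idxOf_lt_length_iff.mpr (Finset.mem_toList.mpr hup)
      refine ⟨⟨List.idxOf u (L i), hlt⟩, ?_, ?_, by rw [← hφu', hfemb, hφu2]⟩
      · show a ≤ List.idxOf u (L i)
        rw [ha u hup]; omega
      · show List.idxOf u (L i) < a + p.card
        rw [ha u hup]; omega
    · rintro ⟨j, hj1, hj2, rfl⟩
      have hlt : (j : ℕ) - a < p.toList.length := by rw [Finset.length_toList]; omega
      have hup : p.toList.get ⟨(j : ℕ) - a, hlt⟩ ∈ p := Finset.mem_toList.mp (List.get_mem _ _)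
      have hidxp : List.idxOf (p.toList.get ⟨(j : ℕ) - a, hlt⟩) p.toList = (j : ℕ) - a :=
        List.get_idxOf (Finset.nodup_toList p) _
      have huS : p.toList.get ⟨(j : ℕ) - a, hlt⟩ ∈ S i := hpQ.2.2 _ hup
      have hLu : List.idxOf (p.toList.get ⟨(j : ℕ) - a, hlt⟩) (L i) = (j : ℕ) := by
        rw [ha _ hup, hidxp]; omega
      refine Finset.mem_coe.mpr (Finset.mem_map.mpr ⟨_, hup, ?_⟩)
      show φ _ = some ⟨i, j⟩
      rw [hφS i _ huS (by rw [hLu]; exact j.2)]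
      exact congrArg some (congrArg (Sigma.mk i) (Fin.ext hLu))
  -- assemble the partition
  let pemb : Finset V ↪ Finset (Option (Σ i : Fin d, Fin (c i))) :=
    ⟨Finset.map femb, Finset.map_injective femb⟩
  refine ⟨⟨P.parts.map pemb, ?_, ?_, ?_⟩, ?_, ?_⟩
  · rw [Finset.supIndep_iff_pairwiseDisjoint]
    rintro x hx y hy hxy
    obtain ⟨p, hp, rfl⟩ := Finset.mem_map.mp (Finset.mem_coe.mp hx)
    obtain ⟨q, hq, rfl⟩ := Finset.mem_map.mp (Finset.mem_coe.mp hy)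
    have hpq : p ≠ q := fun hEq => hxy (by rw [hEq])
    exact (Finset.disjoint_map femb).mpr
      (P.disjoint (Finset.mem_coe.mpr hp) (Finset.mem_coe.mpr hq) hpq)
  · ext x
    simp only [Finset.mem_sup, Finset.mem_univ, iff_true, id]
    obtain ⟨p, hp, hup⟩ := P.exists_mem (Finset.mem_univ (ψ x))
    exact ⟨p.map femb, Finset.mem_map_of_mem pemb hp,
      Finset.mem_map.mpr ⟨ψ x, hup, hright x⟩⟩
  · intro hbot
    obtain ⟨p, hp, hpe⟩ := Finset.mem_map.mp hbot
    have hpemp : p = ∅ := Finset.map_eq_empty.mp hpe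
    apply P.bot_notMem
    rw [Finset.bot_eq_empty, ← hpemp]
    exact hp
  · intro t ht
    obtain ⟨p, hp, rfl⟩ := Finset.mem_map.mp ht
    by_cases hpB : p = B
    · subst hpB
      exact hconnB
    · obtain ⟨i, hpS⟩ := hpart_sub p hp hpB
      exact hconnQ i p ((hQmem i p).mpr ⟨hp, hpB, hpS⟩)
  · show (P.parts.map pemb).val.map Finset.card = μ
    rw [Finset.map_val, Multiset.map_map, ← hPcard]
    apply Multiset.map_congr rfl
    intro p hp
    exact Finset.card_map femb
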